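/- Let K be a field of characteristic zero and let P = x + Σ_{2≤i+j≤3} p_{ij} x^i y^j and Q = y + Σ_{2≤i+j≤3} q_{ij} x^i y^j be polynomials in K[x,y] (a Poincaré differential form of degree 3). Suppose F ∈ K[[x,y]] is a formal power series such that F − (x² + y²) has order at least 3, and (s_j)_{j≥1} is a sequence in K with F_x·Q − F_y·P = Σ_{j=1}^∞ s_j·(x^{2j+2} + y^{2j+2}) in K[[x,y]]. Then s_1 = (2/3)·p_{02}·q_{02} + (1/3)·p_{02}·p_{11} − (1/3)·q_{02}·q_{11} + (1/3)·p_{11}·p_{20} − (1/3)·q_{11}·q_{20} − (2/3)·p_{20}·q_{20} − p_{03} + (1/3)·q_{12} − (1/3)·p_{21} + q_{30}. -/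

import Mathlib

open MvPolynomial

/-- The formal partial derivative of a formal power series in two variables. -/
noncomputable def psDeriv {K : Type*} [CommSemiring K] (i : Fin 2)
    (f : MvPowerSeries (Fin 2) K) : MvPowerSeries (Fin 2) K :=
  fun e => ((e i + 1 : ℕ) : K) * MvPowerSeries.coeff (e + Finsupp.single i 1) f

noncomputable def sng (a b : ℕ) : Fin 2 →₀ ℕ := Finsupp.single 0 a + Finsupp.single 1 b

lemma sng_apply0 (a b : ℕ) : sng a b 0 = a := by simp [sng, Finsupp.single_apply]
lemma sng_apply1 (a b : ℕ) : sng a b 1 = b := by simp [sng, Finsupp.single_apply]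

lemma sng_single0 (n : ℕ) : Finsupp.single (0 : Fin 2) n = sng n 0 := by simp [sng]
lemma sng_single1 (n : ℕ) : Finsupp.single (1 : Fin 2) n = sng 0 n := by simp [sng]

lemma sng_le (i j a b : ℕ) : sng i j ≤ sng a b ↔ i ≤ a ∧ j ≤ b := by
  constructor
  · intro h
    exact ⟨by simpa [sng_apply0] using h 0, by simpa [sng_apply1] using h 1⟩
  · rintro ⟨h1, h2⟩ s
    fin_cases s <;> simpa [sng_apply0, sng_apply1]

lemma sng_sub (a b i j : ℕ) : sng a b - sng i j = sng (a - i) (b - j) := by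
  ext s
  fin_cases s <;> simp [Finsupp.tsub_apply, sng_apply0, sng_apply1]

lemma sng_add (a b i j : ℕ) : sng a b + sng i j = sng (a + i) (b + j) := by
  ext s
  fin_cases s <;> simp [sng_apply0, sng_apply1]

lemma sng_inj (a b c d : ℕ) : sng a b = sng c d ↔ a = c ∧ b = d := by
  constructor
  · intro h
    exact ⟨by rw [← sng_apply0 a b, h, sng_apply0], by rw [← sng_apply1 a b, h, sng_apply1]⟩
  · rintro ⟨rfl, rfl⟩; rfl

lemma coeff_psDeriv0 {K : Type*} [CommSemiring K] (F : MvPowerSeries (Fin 2) K) (a b : ℕ) :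
    MvPowerSeries.coeff (sng a b) (psDeriv 0 F)
      = ((a + 1 : ℕ) : K) * MvPowerSeries.coeff (sng (a+1) b) F := by
  show ((sng a b 0 + 1 : ℕ) : K) * MvPowerSeries.coeff (sng a b + Finsupp.single 0 1) F = _
  rw [sng_apply0, sng_single0, sng_add, add_zero]

lemma coeff_psDeriv1 {K : Type*} [CommSemiring K] (F : MvPowerSeries (Fin 2) K) (a b : ℕ) :
    MvPowerSeries.coeff (sng a b) (psDeriv 1 F)
      = ((b + 1 : ℕ) : K) * MvPowerSeries.coeff (sng a (b+1)) F := by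
  show ((sng a b 1 + 1 : ℕ) : K) * MvPowerSeries.coeff (sng a b + Finsupp.single 1 1) F = _
  rw [sng_apply1, sng_single1, sng_add, add_zero]

lemma coe_mon {K : Type*} [CommRing K] (i j : ℕ) (c : K) :
    ((C c * X 0 ^ i * X 1 ^ j : MvPolynomial (Fin 2) K) : MvPowerSeries (Fin 2) K)
      = MvPowerSeries.monomial (sng i j) c := by
  have : (C c * X 0 ^ i * X 1 ^ j : MvPolynomial (Fin 2) K) = monomial (sng i j) c := by
    rw [X_pow_eq_monomial, X_pow_eq_monomial, C_apply, monomial_mul, monomial_mul]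
    simp [sng]
  rw [this, coe_monomial]

lemma coeff_mul_mon {K : Type*} [CommRing K] (f : MvPowerSeries (Fin 2) K)
    (a b i j : ℕ) (c : K) :
    MvPowerSeries.coeff (sng a b) (f * MvPowerSeries.monomial (sng i j) c)
      = if i ≤ a ∧ j ≤ b then MvPowerSeries.coeff (sng (a-i) (b-j)) f * c else 0 := by
  rw [MvPowerSeries.coeff_mul_monomial, sng_sub]
  simp [sng_le]
set_option maxHeartbeats 2000000

/-- **The first focal polynomial for degree 3 Poincaré differential forms.**
If `P = x + ∑_{2 ≤ i+j ≤ 3} p_{ij} x^i y^j`, `Q = y + ∑_{2 ≤ i+j ≤ 3} q_{ij} x^i y^j`,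
`F` is a formal power series with `F − (x² + y²)` of order ≥ 3 and `(s_j)` a sequence with
`F_x·Q − F_y·P = ∑_{j≥1} s_j·(x^{2j+2} + y^{2j+2})` (coefficientwise), then
`s₁ = (2/3)p₀₂q₀₂ + (1/3)p₀₂p₁₁ − (1/3)q₀₂q₁₁ + (1/3)p₁₁p₂₀ − (1/3)q₁₁q₂₀ − (2/3)p₂₀q₂₀
  − p₀₃ + (1/3)q₁₂ − (1/3)p₂₁ + q₃₀`. -/
theorem first_focal_value_formula
    (K : Type*) [Field K] [CharZero K]
    (p q : ℕ → ℕ → K)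
    (hp : ∀ i j : ℕ, (i + j < 2 ∨ 3 < i + j) → p i j = 0)
    (hq : ∀ i j : ℕ, (i + j < 2 ∨ 3 < i + j) → q i j = 0)
    (P Q : MvPolynomial (Fin 2) K)
    (hP : P = X 0 + ∑ ij ∈ (Finset.range 4 ×ˢ Finset.range 4).filter
        (fun ij => 2 ≤ ij.1 + ij.2 ∧ ij.1 + ij.2 ≤ 3),
        C (p ij.1 ij.2) * X 0 ^ ij.1 * X 1 ^ ij.2)
    (hQ : Q = X 1 + ∑ ij ∈ (Finset.range 4 ×ˢ Finset.range 4).filter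
        (fun ij => 2 ≤ ij.1 + ij.2 ∧ ij.1 + ij.2 ≤ 3),
        C (q ij.1 ij.2) * X 0 ^ ij.1 * X 1 ^ ij.2)
    (F : MvPowerSeries (Fin 2) K)
    (hF : ∀ e : Fin 2 →₀ ℕ, e 0 + e 1 < 3 →
      MvPowerSeries.coeff e
        (F - (((X 0)^2 + (X 1)^2 : MvPolynomial (Fin 2) K) : MvPowerSeries (Fin 2) K)) = 0)
    (s : ℕ → K)
    (hs : ∀ j : ℕ, 1 ≤ j →
      MvPowerSeries.coeff (Finsupp.single 0 (2*j+2))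
        (psDeriv 0 F * (Q : MvPowerSeries (Fin 2) K)
          - psDeriv 1 F * (P : MvPowerSeries (Fin 2) K)) = s j ∧
      MvPowerSeries.coeff (Finsupp.single 1 (2*j+2))
        (psDeriv 0 F * (Q : MvPowerSeries (Fin 2) K)
          - psDeriv 1 F * (P : MvPowerSeries (Fin 2) K)) = s j)
    (hs0 : ∀ e : Fin 2 →₀ ℕ,
      (¬ ∃ j : ℕ, 1 ≤ j ∧ (e = Finsupp.single 0 (2*j+2) ∨ e = Finsupp.single 1 (2*j+2))) →
      MvPowerSeries.coeff e
        (psDeriv 0 F * (Q : MvPowerSeries (Fin 2) K)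
          - psDeriv 1 F * (P : MvPowerSeries (Fin 2) K)) = 0) :
    s 1 = (2/3) * p 0 2 * q 0 2 + (1/3) * p 0 2 * p 1 1 - (1/3) * q 0 2 * q 1 1
      + (1/3) * p 1 1 * p 2 0 - (1/3) * q 1 1 * q 2 0 - (2/3) * p 2 0 * q 2 0
      - p 0 3 + (1/3) * q 1 2 - (1/3) * p 2 1 + q 3 0 := by
  -- expand the polynomials into explicit monomial sums
  have hQe : Q = C 1 * X 0 ^ 0 * X 1 ^ 1
      + C (q 0 2) * X 0 ^ 0 * X 1 ^ 2 + C (q 0 3) * X 0 ^ 0 * X 1 ^ 3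
      + C (q 1 1) * X 0 ^ 1 * X 1 ^ 1 + C (q 1 2) * X 0 ^ 1 * X 1 ^ 2
      + C (q 2 0) * X 0 ^ 2 * X 1 ^ 0 + C (q 2 1) * X 0 ^ 2 * X 1 ^ 1
      + C (q 3 0) * X 0 ^ 3 * X 1 ^ 0 := by
    rw [hQ]
    norm_num [Finset.sum_filter, Finset.sum_product, Finset.sum_range_succ]
    ring
  have hPe : P = C 1 * X 0 ^ 1 * X 1 ^ 0
      + C (p 0 2) * X 0 ^ 0 * X 1 ^ 2 + C (p 0 3) * X 0 ^ 0 * X 1 ^ 3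
      + C (p 1 1) * X 0 ^ 1 * X 1 ^ 1 + C (p 1 2) * X 0 ^ 1 * X 1 ^ 2
      + C (p 2 0) * X 0 ^ 2 * X 1 ^ 0 + C (p 2 1) * X 0 ^ 2 * X 1 ^ 1
      + C (p 3 0) * X 0 ^ 3 * X 1 ^ 0 := by
    rw [hP]
    norm_num [Finset.sum_filter, Finset.sum_product, Finset.sum_range_succ]
    ring
  have hQc : (Q : MvPowerSeries (Fin 2) K) = MvPowerSeries.monomial (sng 0 1) 1
      + MvPowerSeries.monomial (sng 0 2) (q 0 2) + MvPowerSeries.monomial (sng 0 3) (q 0 3)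
      + MvPowerSeries.monomial (sng 1 1) (q 1 1) + MvPowerSeries.monomial (sng 1 2) (q 1 2)
      + MvPowerSeries.monomial (sng 2 0) (q 2 0) + MvPowerSeries.monomial (sng 2 1) (q 2 1)
      + MvPowerSeries.monomial (sng 3 0) (q 3 0) := by
    rw [hQe]; simp only [MvPolynomial.coe_add, coe_mon]
  have hPc : (P : MvPowerSeries (Fin 2) K) = MvPowerSeries.monomial (sng 1 0) 1
      + MvPowerSeries.monomial (sng 0 2) (p 0 2) + MvPowerSeries.monomial (sng 0 3) (p 0 3)
      + MvPowerSeries.monomial (sng 1 1) (p 1 1) + MvPowerSeries.monomial (sng 1 2) (p 1 2)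
      + MvPowerSeries.monomial (sng 2 0) (p 2 0) + MvPowerSeries.monomial (sng 2 1) (p 2 1)
      + MvPowerSeries.monomial (sng 3 0) (p 3 0) := by
    rw [hPe]; simp only [MvPolynomial.coe_add, coe_mon]
  -- the known low-degree coefficients of F
  have hgv : ∀ a b : ℕ, a + b < 3 → MvPowerSeries.coeff (sng a b) F =
      (if 2 = a ∧ 0 = b then 1 else 0) + (if 0 = a ∧ 2 = b then 1 else 0) := by
    intro a b hab
    have h := hF (sng a b) (by rw [sng_apply0, sng_apply1]; exact hab)
    rw [map_sub, sub_eq_zero] at h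
    rw [h, MvPolynomial.coeff_coe, MvPolynomial.coeff_add, MvPolynomial.coeff_X_pow,
      MvPolynomial.coeff_X_pow, sng_single0, sng_single1]
    simp only [sng_inj]
  have hg00 : MvPowerSeries.coeff (sng 0 0) F = 0 := by
    rw [hgv 0 0 (by norm_num)]; norm_num
  have hg10 : MvPowerSeries.coeff (sng 1 0) F = 0 := by
    rw [hgv 1 0 (by norm_num)]; norm_num
  have hg01 : MvPowerSeries.coeff (sng 0 1) F = 0 := by
    rw [hgv 0 1 (by norm_num)]; norm_num
  have hg11 : MvPowerSeries.coeff (sng 1 1) F = 0 := by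
    rw [hgv 1 1 (by norm_num)]; norm_num
  have hg20 : MvPowerSeries.coeff (sng 2 0) F = 1 := by
    rw [hgv 2 0 (by norm_num)]; norm_num
  have hg02 : MvPowerSeries.coeff (sng 0 2) F = 1 := by
    rw [hgv 0 2 (by norm_num)]; norm_num
  -- the coefficient equations
  have hzero : ∀ a b : ℕ, (∀ j : ℕ, 1 ≤ j → ¬(a = 2*j+2 ∧ b = 0) ∧ ¬(a = 0 ∧ b = 2*j+2)) →
      MvPowerSeries.coeff (sng a b)
        (psDeriv 0 F * (Q : MvPowerSeries (Fin 2) K)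
          - psDeriv 1 F * (P : MvPowerSeries (Fin 2) K)) = 0 := by
    intro a b h
    apply hs0
    rintro ⟨j, hj, hor | hor⟩
    · rw [sng_single0, sng_inj] at hor
      exact ((h j hj).1 hor)
    · rw [sng_single1, sng_inj] at hor
      exact ((h j hj).2 hor)
  have e30 := hzero 3 0 (by intro j hj; omega)
  have e21 := hzero 2 1 (by intro j hj; omega)
  have e12 := hzero 1 2 (by intro j hj; omega)
  have e03 := hzero 0 3 (by intro j hj; omega)
  have e22 := hzero 2 2 (by intro j hj; omega)
  have e40 : MvPowerSeries.coeff (sng 4 0)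
      (psDeriv 0 F * (Q : MvPowerSeries (Fin 2) K)
        - psDeriv 1 F * (P : MvPowerSeries (Fin 2) K)) = s 1 := by
    have h := (hs 1 le_rfl).1
    rwa [show Finsupp.single (0 : Fin 2) (2*1+2) = sng 4 0 by rw [sng_single0]] at h
  have e04 : MvPowerSeries.coeff (sng 0 4)
      (psDeriv 0 F * (Q : MvPowerSeries (Fin 2) K)
        - psDeriv 1 F * (P : MvPowerSeries (Fin 2) K)) = s 1 := by
    have h := (hs 1 le_rfl).2
    rwa [show Finsupp.single (1 : Fin 2) (2*1+2) = sng 0 4 by rw [sng_single1]] at h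
  rw [map_sub, hQc, hPc] at e30 e21 e12 e03 e22 e40 e04
  simp only [mul_add, map_add, map_sub, coeff_mul_mon, coeff_psDeriv0, coeff_psDeriv1] at e30 e21 e12 e03 e22 e40 e04
  norm_num [hg00, hg10, hg01, hg11, hg20, hg02] at e30 e21 e12 e03 e22 e40 e04
  linear_combination (-(1:K)/2) * e40 + (-(1:K)/6) * e22 + (-(1:K)/2) * e04
    + (-(1:K)/6) * (2 * q 1 1 - 5 * p 2 0 - 7 * p 0 2) * e30
    + (-(1:K)/6) * (0 - 3 * q 2 0 - q 0 2) * e21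
    + (-(1:K)/6) * (0 - p 2 0 - 3 * p 0 2) * e12
    + (-(1:K)/6) * (2 * p 1 1 - 7 * q 2 0 - 5 * q 0 2) * e03
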